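/- Let G be a cubic graph, F a 2-factor of G, M a matching in F, and 𝒫 an F-matching of H = G − M. Then every loop of the F-complement of 𝒫 has even length; in fact, along each loop the edges alternate between edges of F and edges of G not in F. -/

import Mathlib

open SimpleGraph

variable {V : Type*}

/-- A cubic graph: every vertex has exactly `3` neighbours. -/
def IsCubic (G : SimpleGraph V) : Prop :=
  ∀ v : V, (G.neighborSet v).ncard = 3

/-- Two edges (as elements of `Sym2 V`) are adjacent if they are distinct and
share an endpoint. -/
def EdgesAdj (e₁ e₂ : Sym2 V) : Prop :=
  e₁ ≠ e₂ ∧ ∃ v : V, v ∈ e₁ ∧ v ∈ e₂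

/-- `G` has a proper `3`-edge-coloring. -/
def HasProper3EdgeColoring (G : SimpleGraph V) : Prop :=
  ∃ c : Sym2 V → Fin 3,
    ∀ e₁ ∈ G.edgeSet, ∀ e₂ ∈ G.edgeSet, EdgesAdj e₁ e₂ → c e₁ ≠ c e₂

/-- A bridgeless graph: no edge is a bridge. -/
def IsBridgeless (G : SimpleGraph V) : Prop :=
  ∀ e ∈ G.edgeSet, ¬ G.IsBridge e

/-- A snark: a connected bridgeless cubic graph admitting no proper
`3`-edge-coloring. -/
def IsSnark (G : SimpleGraph V) : Prop :=
  G.Connected ∧ IsBridgeless G ∧ IsCubic G ∧ ¬ HasProper3EdgeColoring G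

/-- A proper abelian coloring of `G` by the abelian group `A`: every edge gets a
nonzero color, adjacent edges get distinct colors, and at every vertex the
colors of the incident edges sum to zero. -/
def IsProperAbelianColoring {A : Type*} [AddCommGroup A]
    (G : SimpleGraph V) (σ : Sym2 V → A) : Prop :=
  (∀ e ∈ G.edgeSet, σ e ≠ 0) ∧
  (∀ e₁ ∈ G.edgeSet, ∀ e₂ ∈ G.edgeSet, EdgesAdj e₁ e₂ → σ e₁ ≠ σ e₂) ∧
  (∀ v : V, ∑ᶠ e ∈ G.incidenceSet v, σ e = 0)

/-- `F` is a `2`-factor of `G`: a spanning `2`-regular subgraph. -/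
def IsTwoFactor (G F : SimpleGraph V) : Prop :=
  F ≤ G ∧ ∀ v : V, (F.neighborSet v).ncard = 2

/-- `M` is a matching contained in the edge set of `F`. -/
def IsMatchingIn (M : Set (Sym2 V)) (F : SimpleGraph V) : Prop :=
  M ⊆ F.edgeSet ∧ ∀ e₁ ∈ M, ∀ e₂ ∈ M, e₁ ≠ e₂ → ¬ ∃ v : V, v ∈ e₁ ∧ v ∈ e₂

/-- A perfect matching in `F`: a matching covering every vertex. -/
def IsPerfectMatchingIn (M : Set (Sym2 V)) (F : SimpleGraph V) : Prop :=
  IsMatchingIn M F ∧ ∀ v : V, ∃ e ∈ M, v ∈ e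

/-- A maximum matching in `F`: a matching of maximum cardinality. -/
def IsMaximumMatchingIn (M : Set (Sym2 V)) (F : SimpleGraph V) : Prop :=
  IsMatchingIn M F ∧ ∀ M' : Set (Sym2 V), IsMatchingIn M' F → M'.ncard ≤ M.ncard

/-- A `3`-vertex of `H`: a vertex of degree `3`. -/
def IsThreeVertex (H : SimpleGraph V) (v : V) : Prop := (H.neighborSet v).ncard = 3

/-- A `2`-vertex of `H`: a vertex of degree `2`. -/
def IsTwoVertex (H : SimpleGraph V) (v : V) : Prop := (H.neighborSet v).ncard = 2

/-- An `F`-path in `H`: a (nontrivial) path in `H` whose two end-vertices are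
`3`-vertices of `H`, whose interior vertices are all `2`-vertices of `H`, and
whose two end-edges belong to `F`. -/
structure FPathIn (H F : SimpleGraph V) where
  a : V
  b : V
  walk : H.Walk a b
  isPath : walk.IsPath
  len_pos : 0 < walk.length
  ends_three : IsThreeVertex H a ∧ IsThreeVertex H b
  interior_two : ∀ w ∈ walk.support, w ≠ a → w ≠ b → IsTwoVertex H w
  end_edges : ∀ e ∈ walk.edges, (a ∈ e ∨ b ∈ e) → e ∈ F.edgeSet

/-- The vertices of an `F`-path. -/
def FPathIn.supp {H F : SimpleGraph V} (P : FPathIn H F) : Set V :=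
  {v | v ∈ P.walk.support}

/-- The edges of an `F`-path. -/
def FPathIn.edgeSet {H F : SimpleGraph V} (P : FPathIn H F) : Set (Sym2 V) :=
  {e | e ∈ P.walk.edges}

/-- An `F`-matching of `H`: a collection of pairwise vertex-disjoint `F`-paths
such that every `3`-vertex of `H` lies on (exactly) one of them. -/
def IsFMatching (H F : SimpleGraph V) (Ps : Set (FPathIn H F)) : Prop :=
  (∀ P ∈ Ps, ∀ Q ∈ Ps, P ≠ Q → Disjoint P.supp Q.supp) ∧
  (∀ v : V, IsThreeVertex H v → ∃ P ∈ Ps, v ∈ P.supp)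

/-- The set of edges lying on the paths of an `F`-matching. -/
def FMatchingEdges {H F : SimpleGraph V} (Ps : Set (FPathIn H F)) : Set (Sym2 V) :=
  {e | ∃ P ∈ Ps, e ∈ P.walk.edges}

/-- The `F`-complement of an `F`-matching: the subgraph of `H` induced by the
edges of `H` not lying on the paths of `Ps`. -/
def FComplement {H F : SimpleGraph V} (Ps : Set (FPathIn H F)) : SimpleGraph V :=
  H.deleteEdges (FMatchingEdges Ps)

/-- The number of `3`-vertices of `H` lying on a connected component `c` of `K`. -/
noncomputable def threeCount (H : SimpleGraph V) {K : SimpleGraph V} (c : K.ConnectedComponent) : ℕ :=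
  {v ∈ c.supp | IsThreeVertex H v}.ncard

/-- The graph `K` (an `F`-complement, whose nontrivial components are the
loops) is `3`-even w.r.t. `H`: every component carries an even number of
`3`-vertices of `H`. -/
def IsThreeEvenComplement (H K : SimpleGraph V) : Prop :=
  ∀ c : K.ConnectedComponent, Even (threeCount H c)

/-- A component of `K` is a `3`-odd loop if it carries an odd number of
`3`-vertices of `H`. -/
def Is3OddLoop (H : SimpleGraph V) {K : SimpleGraph V} (c : K.ConnectedComponent) : Prop :=
  Odd (threeCount H c)

/-- The number of odd components (odd cycles, for a `2`-factor) of `F`. -/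
noncomputable def oddCompCount (F : SimpleGraph V) : ℕ :=
  {c : F.ConnectedComponent | Odd c.supp.ncard}.ncard

/-- The number of even components (even cycles, for a `2`-factor) of `F`. -/
noncomputable def evenCompCount (F : SimpleGraph V) : ℕ :=
  {c : F.ConnectedComponent | Even c.supp.ncard}.ncard

/-- The oddness of `G`: the minimum number of odd cycles in a `2`-factor of `G`. -/
noncomputable def oddness (G : SimpleGraph V) : ℕ :=
  sInf {n : ℕ | ∃ F : SimpleGraph V, IsTwoFactor G F ∧ oddCompCount F = n}

/-- `v` lies on an odd component (odd cycle) of `F`. -/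
def OnOddCycle (F : SimpleGraph V) (v : V) : Prop :=
  Odd ((F.connectedComponentMk v).supp.ncard)

/-- A simple `F`-matching: an `F`-matching such that on each of its paths the
only edges lying on odd cycles of `F` are the edges incident to the
end-vertices. -/
def IsSimpleFMatching (H F : SimpleGraph V) (Ps : Set (FPathIn H F)) : Prop :=
  IsFMatching H F Ps ∧
  ∀ P ∈ Ps, ∀ e ∈ P.walk.edges,
    (e ∈ F.edgeSet ∧ ∀ w ∈ e, OnOddCycle F w) → (P.a ∈ e ∨ P.b ∈ e)

/-- The set `C ⊆ V` carries a `Θ`-graph structure in `H`: two distinct vertices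
joined by three internally disjoint paths whose union is exactly the part of
`H` on `C`. -/
def IsThetaOn (H : SimpleGraph V) (C : Set V) : Prop :=
  ∃ a b : V, a ≠ b ∧ ∃ p q r : H.Walk a b,
    p.IsPath ∧ q.IsPath ∧ r.IsPath ∧ p ≠ q ∧ p ≠ r ∧ q ≠ r ∧
    (∀ w ∈ p.support, w ∈ q.support → w = a ∨ w = b) ∧
    (∀ w ∈ p.support, w ∈ r.support → w = a ∨ w = b) ∧
    (∀ w ∈ q.support, w ∈ r.support → w = a ∨ w = b) ∧
    C = {w | w ∈ p.support ∨ w ∈ q.support ∨ w ∈ r.support} ∧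
    (∀ e ∈ H.edgeSet, (∀ w ∈ e, w ∈ C) → e ∈ p.edges ∨ e ∈ q.edges ∨ e ∈ r.edges)

/-- The set `C ⊆ V` carries a kayak-paddle graph structure in `H`: two
vertex-disjoint cycles joined by a path, their union being exactly the part of
`H` on `C`. -/
def IsKayakPaddleOn (H : SimpleGraph V) (C : Set V) : Prop :=
  ∃ a b : V, ∃ (c₁ : H.Walk a a) (c₂ : H.Walk b b) (p : H.Walk a b),
    c₁.IsCycle ∧ c₂.IsCycle ∧ p.IsPath ∧
    (∀ w ∈ c₁.support, w ∉ c₂.support) ∧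
    (∀ w ∈ p.support, w ∈ c₁.support → w = a) ∧
    (∀ w ∈ p.support, w ∈ c₂.support → w = b) ∧
    C = {w | w ∈ c₁.support ∨ w ∈ c₂.support ∨ w ∈ p.support} ∧
    (∀ e ∈ H.edgeSet, (∀ w ∈ e, w ∈ C) → e ∈ c₁.edges ∨ e ∈ c₂.edges ∨ e ∈ p.edges)

/-- The set `C ⊆ V` carries an even cycle of `H` whose vertices and edges are
exactly the part of `H` on `C`. -/
def IsEvenCycleOn (H : SimpleGraph V) (C : Set V) : Prop :=
  ∃ a : V, ∃ W : H.Walk a a, W.IsCycle ∧ Even W.length ∧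
    C = {w | w ∈ W.support} ∧
    (∀ e ∈ H.edgeSet, (∀ w ∈ e, w ∈ C) → e ∈ W.edges)

/-- `Meven` is a perfect matching of the even part `F_even` of the `2`-factor
`F`: a matching of `F` using only edges on even cycles and covering all
vertices of even cycles. -/
def IsPerfectMatchingOfEvenPart (Meven : Set (Sym2 V)) (F : SimpleGraph V) : Prop :=
  IsMatchingIn Meven F ∧
  (∀ e ∈ Meven, ∀ w ∈ e, ¬ OnOddCycle F w) ∧
  (∀ v : V, ¬ OnOddCycle F v → ∃ e ∈ Meven, v ∈ e)

/-- Two odd components `c₁`, `c₂` of `F` are linked in `H_odd = G − M_even`: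
there is a path of `H_odd` from `c₁` to `c₂` all of whose interior vertices
avoid odd cycles of `F` (i.e. are `2`-vertices of `H_odd`). -/
def OddCompLinked (G F : SimpleGraph V) (Meven : Set (Sym2 V))
    (c₁ c₂ : F.ConnectedComponent) : Prop :=
  ∃ u v : V, u ∈ c₁.supp ∧ v ∈ c₂.supp ∧
    ∃ W : (G.deleteEdges Meven).Walk u v, W.IsPath ∧ 0 < W.length ∧
      ∀ w ∈ W.support, w ≠ u → w ≠ v → ¬ OnOddCycle F w

/-- The odd-cycle-incidence graph `K_odd`: vertices are the odd cycles of `F`,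
two of them being adjacent iff they are linked by a path of
`H_odd = G − M_even` with all interior vertices `2`-vertices of `H_odd`
(this is `H_odd` with the edges of `F_odd` contracted and the `2`-vertices
suppressed). -/
def Kodd (G F : SimpleGraph V) (Meven : Set (Sym2 V)) :
    SimpleGraph {c : F.ConnectedComponent // Odd c.supp.ncard} where
  Adj c₁ c₂ := c₁ ≠ c₂ ∧
    (OddCompLinked G F Meven c₁.1 c₂.1 ∨ OddCompLinked G F Meven c₂.1 c₁.1)
  symm := ⟨fun c₁ c₂ h => ⟨h.1.symm, h.2.symm⟩⟩
  loopless := ⟨fun c h => h.1 rfl⟩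

/-- The set of edges of `K` lying on the connected component `c` of `K`. -/
def compEdgeSet (K : SimpleGraph V) (c : K.ConnectedComponent) : Set (Sym2 V) :=
  {e ∈ K.edgeSet | ∃ w, w ∈ e ∧ w ∈ c.supp}

/-- The set `E_Ps` of end-edges of the paths of an `F`-matching `Ps`. -/
def endEdges {H F : SimpleGraph V} (Ps : Set (FPathIn H F)) : Set (Sym2 V) :=
  {e | ∃ P ∈ Ps, e ∈ P.walk.edges ∧ (P.a ∈ e ∨ P.b ∈ e)}

/-- The edge set attached to a vertex of the loop-cycle-incidence graph `B`:
a component of `F − E_Ps`, a loop of the `F`-complement `ℒ`, or a path of `Ps`. -/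
def bEdgeSet (F : SimpleGraph V) {H : SimpleGraph V} (Ps : Set (FPathIn H F)) :
    (F.deleteEdges (endEdges Ps)).ConnectedComponent ⊕
      ((FComplement Ps).ConnectedComponent ⊕ ↥Ps) → Set (Sym2 V)
  | Sum.inl C => compEdgeSet (F.deleteEdges (endEdges Ps)) C
  | Sum.inr (Sum.inl c) => compEdgeSet (FComplement Ps) c
  | Sum.inr (Sum.inr P) => FPathIn.edgeSet P.1

/-- The loop-cycle-incidence graph `B`: a bipartite graph on
`𝒞* ⊕ (ℒ ⊕ Ps)`, where `𝒞*` is the set of components of `F − E_Ps`, `ℒ` the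
set of components (loops) of the `F`-complement and `Ps` the paths of the
`F`-matching; a component of `F − E_Ps` is adjacent to a loop/path iff they
share an edge of `G`. -/
def LoopCycleIncidence (F : SimpleGraph V) {H : SimpleGraph V}
    (Ps : Set (FPathIn H F)) :
    SimpleGraph ((F.deleteEdges (endEdges Ps)).ConnectedComponent ⊕
      ((FComplement Ps).ConnectedComponent ⊕ ↥Ps)) where
  Adj a b := ((a.isLeft ∧ b.isRight) ∨ (a.isRight ∧ b.isLeft)) ∧
    ∃ e, e ∈ bEdgeSet F Ps a ∧ e ∈ bEdgeSet F Ps b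
  symm := ⟨by
    rintro a b ⟨hs, e, h₁, h₂⟩
    exact ⟨by tauto, e, h₂, h₁⟩⟩
  loopless := ⟨by
    rintro a ⟨hs, -⟩
    rcases a with a | a <;> simp_all⟩

/-- Remove a set of vertices from a graph (keeping them as isolated vertices):
used to form `B − Ps`. -/
def removeVerts {W : Type*} (B : SimpleGraph W) (S : Set W) : SimpleGraph W where
  Adj a b := B.Adj a b ∧ a ∉ S ∧ b ∉ S
  symm := ⟨fun a b h => ⟨h.1.symm, h.2.2, h.2.1⟩⟩
  loopless := ⟨fun a h => B.loopless.irrefl a h.1⟩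

/-- The vertices of `B` corresponding to the paths of `Ps`. -/
def PVerts (F : SimpleGraph V) {H : SimpleGraph V} (Ps : Set (FPathIn H F)) :
    Set ((F.deleteEdges (endEdges Ps)).ConnectedComponent ⊕
      ((FComplement Ps).ConnectedComponent ⊕ ↥Ps)) :=
  {x | ∃ P : ↥Ps, x = Sum.inr (Sum.inr P)}

/-- A permutation snark: a snark having a `2`-factor consisting of precisely
two chordless cycles. -/
def IsPermutationSnark (G : SimpleGraph V) : Prop :=
  IsSnark G ∧ ∃ F : SimpleGraph V, IsTwoFactor G F ∧
    Nat.card F.ConnectedComponent = 2 ∧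
    ∀ u v : V, G.Adj u v → ¬ F.Adj u v →
      F.connectedComponentMk u ≠ F.connectedComponentMk v

/-- The graph obtained from `H` (all of whose vertices have degree `2` or `3`)
by suppressing the degree-`2` vertices is `3`-edge-colorable: there is a
`3`-coloring of the edges which is constant through `2`-vertices and proper at
`3`-vertices. -/
def SuppressedThreeEdgeColorable (H : SimpleGraph V) : Prop :=
  ∃ c : Sym2 V → Fin 3,
    (∀ v : V, IsThreeVertex H v →
      ∀ e₁ ∈ H.incidenceSet v, ∀ e₂ ∈ H.incidenceSet v, e₁ ≠ e₂ → c e₁ ≠ c e₂) ∧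
    (∀ v : V, IsTwoVertex H v →
      ∀ e₁ ∈ H.incidenceSet v, ∀ e₂ ∈ H.incidenceSet v, c e₁ = c e₂)

/-- `e_r(G)`: the minimum cardinality of a set of pairwise non-adjacent edges
of `G` whose removal, followed by suppression of the resulting `2`-vertices,
yields a `3`-edge-colorable (cubic) graph. -/
noncomputable def edgeReductionNumber (G : SimpleGraph V) : ℕ :=
  sInf {n : ℕ | ∃ R : Set (Sym2 V), IsMatchingIn R G ∧
    SuppressedThreeEdgeColorable (G.deleteEdges R) ∧ R.ncard = n}


section AuxStatement11

variable {V : Type*}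

lemma exists_first_edge' {G : SimpleGraph V} {a b : V} (p : G.Walk a b) (hp : 0 < p.length) :
    ∃ x, s(a, x) ∈ p.edges := by
  cases p with
  | nil => simp at hp
  | cons h q => exact ⟨_, List.mem_cons_self⟩

lemma exists_end_edge' {G : SimpleGraph V} {a b : V} (p : G.Walk a b) (hp : 0 < p.length)
    (v : V) (hv : v = a ∨ v = b) : ∃ x, s(v, x) ∈ p.edges := by
  rcases hv with rfl | rfl
  · exact exists_first_edge' p hp
  · obtain ⟨x, hx⟩ := exists_first_edge' p.reverse (by simpa using hp)
    exact ⟨x, by simpa using hx⟩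

lemma key_adj11 [Fintype V] (G F : SimpleGraph V) (M : Set (Sym2 V))
    (hG : IsCubic G) (hF : IsTwoFactor G F) (hM : IsMatchingIn M F)
    (Ps : Set (FPathIn (G.deleteEdges M) F))
    (hPs : IsFMatching (G.deleteEdges M) F Ps)
    (v w₁ w₂ : V) (hne : w₁ ≠ w₂)
    (h1 : (FComplement Ps).Adj v w₁) (h2 : (FComplement Ps).Adj v w₂) :
    F.Adj v w₁ ↔ ¬ F.Adj v w₂ := by
  have h1' : G.Adj v w₁ ∧ s(v, w₁) ∉ M ∧ s(v, w₁) ∉ FMatchingEdges Ps := by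
    simpa [FComplement, SimpleGraph.deleteEdges_adj, and_assoc] using h1
  have h2' : G.Adj v w₂ ∧ s(v, w₂) ∉ M ∧ s(v, w₂) ∉ FMatchingEdges Ps := by
    simpa [FComplement, SimpleGraph.deleteEdges_adj, and_assoc] using h2
  have hNG : (G.neighborSet v).ncard = 3 := hG v
  have hNF : (F.neighborSet v).ncard = 2 := hF.2 v
  have hsub : F.neighborSet v ⊆ G.neighborSet v := fun x hx => hF.1 hx
  constructor
  · intro hf1 hf2
    exfalso
    have hall : ∀ x, F.Adj v x → x = w₁ ∨ x = w₂ := by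
      intro x hx
      by_contra hc
      push_neg at hc
      have h2lt : 2 < (F.neighborSet v).ncard :=
        (Set.two_lt_ncard_iff (Set.toFinite _)).2
          ⟨x, w₁, w₂, hx, hf1, hf2, hc.1, hc.2, hne⟩
      omega
    by_cases hcov : ∃ e ∈ M, v ∈ e
    · obtain ⟨e, heM, hve⟩ := hcov
      obtain ⟨x, rfl⟩ := Sym2.mem_iff_exists.1 hve
      have hFx : F.Adj v x := (F.mem_edgeSet).1 (hM.1 heM)
      rcases hall x hFx with rfl | rfl
      · exact h1'.2.1 heM
      · exact h2'.2.1 heM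
    · have hNH : (G.deleteEdges M).neighborSet v = G.neighborSet v := by
        ext w
        simp only [SimpleGraph.mem_neighborSet, SimpleGraph.deleteEdges_adj]
        exact ⟨fun h => h.1, fun h => ⟨h, fun hm => hcov ⟨_, hm, Sym2.mem_mk_left _ _⟩⟩⟩
      have h3 : IsThreeVertex (G.deleteEdges M) v := by
        unfold IsThreeVertex
        rw [hNH]; exact hNG
      obtain ⟨P, hPmem, hvP⟩ := hPs.2 v h3
      have hvsupp : v ∈ P.walk.support := hvP
      have hvab : v = P.a ∨ v = P.b := by
        by_contra hc
        push_neg at hc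
        have h2v := P.interior_two v hvsupp hc.1 hc.2
        unfold IsTwoVertex at h2v
        unfold IsThreeVertex at h3
        omega
      obtain ⟨x, hx⟩ := exists_end_edge' P.walk P.len_pos v hvab
      have hvae : P.a ∈ (s(v, x) : Sym2 V) ∨ P.b ∈ (s(v, x) : Sym2 V) := by
        rcases hvab with rfl | rfl
        · exact Or.inl (Sym2.mem_mk_left _ _)
        · exact Or.inr (Sym2.mem_mk_left _ _)
      have hFe : (s(v, x) : Sym2 V) ∈ F.edgeSet := P.end_edges _ hx hvae
      have hFx : F.Adj v x := hFe
      have hPE : (s(v, x) : Sym2 V) ∈ FMatchingEdges Ps := ⟨P, hPmem, hx⟩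
      rcases hall x hFx with rfl | rfl
      · exact h1'.2.2 hPE
      · exact h2'.2.2 hPE
  · intro hnot2
    by_contra hnot1
    have hd : ((G.neighborSet v) \ (F.neighborSet v)).ncard = 1 := by
      rw [Set.ncard_diff hsub (Set.toFinite _)]
      omega
    have h1lt : 1 < ((G.neighborSet v) \ (F.neighborSet v)).ncard :=
      (Set.one_lt_ncard_iff (Set.toFinite _)).2
        ⟨w₁, w₂, ⟨h1'.1, hnot1⟩, ⟨h2'.1, hnot2⟩, hne⟩
    omega

lemma key_edge11 [Fintype V] (G F : SimpleGraph V) (M : Set (Sym2 V))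
    (hG : IsCubic G) (hF : IsTwoFactor G F) (hM : IsMatchingIn M F)
    (Ps : Set (FPathIn (G.deleteEdges M) F))
    (hPs : IsFMatching (G.deleteEdges M) F Ps)
    (v : V) (e₁ e₂ : Sym2 V) (h1 : e₁ ∈ (FComplement Ps).edgeSet)
    (h2 : e₂ ∈ (FComplement Ps).edgeSet) (hv1 : v ∈ e₁) (hv2 : v ∈ e₂) (hne : e₁ ≠ e₂) :
    e₁ ∈ F.edgeSet ↔ e₂ ∉ F.edgeSet := by
  obtain ⟨x, rfl⟩ := Sym2.mem_iff_exists.1 hv1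
  obtain ⟨y, rfl⟩ := Sym2.mem_iff_exists.1 hv2
  have hxy : x ≠ y := fun h => hne (by rw [h])
  have := key_adj11 G F M hG hF hM Ps hPs v x y hxy
    ((FComplement Ps).mem_edgeSet.1 h1) ((FComplement Ps).mem_edgeSet.1 h2)
  simpa [SimpleGraph.mem_edgeSet] using this

end AuxStatement11

-- STATEMENT 11
set_option maxHeartbeats 2000000 in
theorem statement11 {V : Type*} [Fintype V] (G F : SimpleGraph V) (M : Set (Sym2 V))
    (hG : IsCubic G) (hF : IsTwoFactor G F) (hM : IsMatchingIn M F)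
    (Ps : Set (FPathIn (G.deleteEdges M) F))
    (hPs : IsFMatching (G.deleteEdges M) F Ps)
    (u : V) (W : (FComplement Ps).Walk u u) (hW : W.IsCycle) :
    Even W.length ∧
      ∀ (i : ℕ) (h : i + 1 < W.edges.length),
        (W.edges[i]'(by omega) ∈ F.edgeSet ↔ W.edges[i + 1]'h ∉ F.edgeSet) := by
  classical
  have hlen : W.edges.length = W.length := W.length_edges
  have hdl : W.darts.length = W.length := W.length_darts
  have hlen3 : 3 ≤ W.length := hW.three_le_length
  have hnodup : W.edges.Nodup := hW.edges_nodup
  have hedge : ∀ (i : ℕ) (h : i < W.edges.length),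
      W.edges[i] = (W.darts[i]'(by omega)).edge := by
    intro i h
    simp [SimpleGraph.Walk.edges]
  have hmemE : ∀ (i : ℕ) (h : i < W.edges.length),
      W.edges[i] ∈ (FComplement Ps).edgeSet := fun i h =>
    W.edges_subset_edgeSet (List.getElem_mem h)
  have hfst : ∀ (i : ℕ) (h : i < W.edges.length),
      (W.darts[i]'(by omega)).fst ∈ W.edges[i] := by
    intro i h
    rw [hedge i h]
    exact Sym2.mem_mk_left _ _
  have hsnd : ∀ (i : ℕ) (h : i < W.edges.length),
      (W.darts[i]'(by omega)).snd ∈ W.edges[i] := by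
    intro i h
    rw [hedge i h]
    exact Sym2.mem_mk_right _ _
  have alt : ∀ (i : ℕ) (h : i + 1 < W.edges.length),
      (W.edges[i]'(by omega) ∈ F.edgeSet ↔ W.edges[i + 1]'h ∉ F.edgeSet) := by
    intro i h
    have hch := List.isChain_iff_getElem.1 W.isChain_dartAdj_darts i (by omega)
    simp only [SimpleGraph.DartAdj] at hch
    have hv1 : (W.darts[i]'(by omega)).snd ∈ W.edges[i]'(by omega) := hsnd i (by omega)
    have hv2 : (W.darts[i]'(by omega)).snd ∈ W.edges[i + 1]'h := by
      rw [hch]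
      exact hfst (i + 1) h
    have hne : W.edges[i]'(by omega) ≠ W.edges[i + 1]'h := by
      intro hEq
      have := (hnodup.getElem_inj_iff).1 hEq
      omega
    exact key_edge11 G F M hG hF hM Ps hPs _ _ _ (hmemE i (by omega)) (hmemE (i + 1) h)
      hv1 hv2 hne
  refine ⟨?_, alt⟩
  by_contra hodd
  rw [Nat.not_even_iff_odd] at hodd
  have claim : ∀ (i : ℕ) (h : i < W.edges.length),
      ((W.edges[i]'h ∈ F.edgeSet) ↔ ((W.edges[0]'(by omega) ∈ F.edgeSet) ↔ Even i)) := by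
    intro i
    induction i with
    | zero => intro h; simp
    | succ n ih =>
      intro h
      have hn := ih (by omega)
      have ha := alt n h
      have hstep : (W.edges[n + 1]'h ∈ F.edgeSet) ↔ ¬ (W.edges[n]'(by omega) ∈ F.edgeSet) := by
        tauto
      rw [hstep, hn, Nat.even_add_one]
      tauto
  have hne0 : W.edges[0]'(by omega) ≠ W.edges[W.edges.length - 1]'(by omega) := by
    intro hEq
    have := (hnodup.getElem_inj_iff).1 hEq
    omega
  have hdne : W.darts ≠ [] := by
    intro hnil
    rw [hnil] at hdl
    simp at hdl
    omega
  have h0u : u ∈ W.edges[0]'(by omega) := by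
    have h0 : (W.darts[0]'(by omega)).fst = u := by
      have h1 : (W.darts.head hdne).fst = u := by simp
      rwa [← List.getElem_zero (by omega)] at h1
    have := hfst 0 (by omega)
    rwa [h0] at this
  have hlu : u ∈ W.edges[W.edges.length - 1]'(by omega) := by
    have hl : (W.darts[W.edges.length - 1]'(by omega)).snd = u := by
      have h1 : (W.darts.getLast hdne).snd = u := by simp
      rw [List.getLast_eq_getElem] at h1
      simpa only [show W.darts.length - 1 = W.edges.length - 1 from by omega] using h1
    have := hsnd (W.edges.length - 1) (by omega)
    rwa [hl] at this
  have hkey := key_edge11 G F M hG hF hM Ps hPs u _ _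
    (hmemE 0 (by omega)) (hmemE (W.edges.length - 1) (by omega)) h0u hlu hne0
  have hlast := claim (W.edges.length - 1) (by omega)
  have heven : Even (W.edges.length - 1) := by
    obtain ⟨k, hk⟩ := hodd
    exact ⟨k, by omega⟩
  simp only [heven, iff_true] at hlast
  tauto
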